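/- Let X be a real Banach space, let A ⊆ X be a nonempty bounded convex set, and let a ∈ A. Then the following are equivalent: (i) a is an SCD point of A; (ii) there exists a sequence of nonempty relatively weakly open subsets of A that is determining for a; (iii) there exists a sequence of convex combinations of slices of A that is determining for a. -/

import Mathlib

open Set Metric

variable {X : Type*} [NormedAddCommGroup X] [NormedSpace ℝ X]

/-- A slice of a bounded convex set `A`. -/
def IsSlice (A S : Set X) : Prop :=
  S.Nonempty ∧ ∃ (f : X →L[ℝ] ℝ) (α : ℝ), 0 < α ∧
    S = {x | x ∈ A ∧ sSup (f '' A) - α < f x}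

/-- `V` is a determining sequence for the point `a` of `A`. -/
def Determining (A : Set X) (V : ℕ → Set X) (a : X) : Prop :=
  ∀ B ⊆ A, (∀ n, (B ∩ V n).Nonempty) → a ∈ closure (convexHull ℝ B)

/-- `a` is a slicely countably determined point of `A`. -/
def SCDPoint (A : Set X) (a : X) : Prop :=
  a ∈ A ∧ ∃ V : ℕ → Set X, (∀ n, IsSlice A (V n)) ∧ Determining A V a

/-- `W` is a nonempty relatively weakly open subset of `A`. -/
def RelWeakOpen {X : Type*} [NormedAddCommGroup X] [NormedSpace ℝ X] (A W : Set X) : Prop :=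
  W.Nonempty ∧ ∃ U : Set (WeakSpace ℝ X), IsOpen U ∧ W = A ∩ (toWeakSpace ℝ X ⁻¹' U)

/-- `C` is a convex combination of (finitely many) slices of `A`. -/
def IsConvexCombOfSlices {X : Type*} [NormedAddCommGroup X] [NormedSpace ℝ X]
    (A C : Set X) : Prop :=
  ∃ (n : ℕ) (S : Fin n → Set X) (l : Fin n → ℝ),
    (∀ i, IsSlice A (S i)) ∧ (∀ i, 0 ≤ l i) ∧ ∑ i, l i = 1 ∧
    C = {x | ∃ y : Fin n → X, (∀ i, y i ∈ S i) ∧ x = ∑ i, l i • y i}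

section InnerLemmas

open Bornology

variable {F : Type*} [NormedAddCommGroup F] [InnerProductSpace ℝ F]

local notation "⟪" x ", " y "⟫" => @inner ℝ _ _ x y

/-- Any farthest point of `K` from `c` is an exposed point of `K`. -/
lemma farthest_exposed {K : Set F} {c e : F} (he : e ∈ K)
    (hmax : ∀ y ∈ K, dist y c ≤ dist e c) :
    ∃ l : F →L[ℝ] ℝ, ∀ y ∈ K, l y ≤ l e ∧ (l y = l e → y = e) := by
  refine ⟨innerSL ℝ (e - c), fun y hy => ?_⟩
  have hnorm : ‖y - c‖ ≤ ‖e - c‖ := by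
    simpa [dist_eq_norm] using hmax y hy
  have hCS : ⟪e - c, y - c⟫ ≤ ‖e - c‖ * ‖y - c‖ := real_inner_le_norm _ _
  have hself : ⟪e - c, e - c⟫ = ‖e - c‖ * ‖e - c‖ := real_inner_self_eq_norm_mul_norm _
  have key : ⟪e - c, y⟫ - ⟪e - c, e⟫ = ⟪e - c, y - c⟫ - ⟪e - c, e - c⟫ := by
    rw [inner_sub_right, inner_sub_right]; ring
  constructor
  · have h1 : ⟪e - c, y - c⟫ ≤ ‖e - c‖ * ‖e - c‖ :=
      hCS.trans (mul_le_mul_of_nonneg_left hnorm (norm_nonneg _))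
    have h2 : ⟪e - c, y⟫ - ⟪e - c, e⟫ ≤ 0 := by rw [key, hself]; linarith
    show ⟪e - c, y⟫ ≤ ⟪e - c, e⟫
    linarith
  · intro hEq
    have hEq' : ⟪e - c, y - c⟫ = ‖e - c‖ * ‖e - c‖ := by
      have : ⟪e - c, y⟫ = ⟪e - c, e⟫ := hEq
      have h0 : ⟪e - c, y⟫ - ⟪e - c, e⟫ = 0 := by rw [this]; ring
      rw [key, hself] at h0; linarith
    by_cases hec : e - c = 0
    · have he0 : ‖e - c‖ = 0 := by simp [hec]
      have : ‖y - c‖ = 0 := le_antisymm (by simpa [he0] using hnorm) (norm_nonneg _)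
      have hyc : y = c := by rwa [norm_sub_eq_zero_iff] at this
      have hec' : e = c := by rwa [sub_eq_zero] at hec
      rw [hyc, hec']
    · have hpos : 0 < ‖e - c‖ := norm_pos_iff.2 hec
      have hge : ‖e - c‖ ≤ ‖y - c‖ := by
        by_contra hlt
        push_neg at hlt
        have : ‖e - c‖ * ‖y - c‖ < ‖e - c‖ * ‖e - c‖ := by gcongr
        linarith [hEq' ▸ hCS]
      have hnn : ‖y - c‖ = ‖e - c‖ := le_antisymm hnorm hge
      have : ⟪e - c, y - c⟫ = ‖e - c‖ * ‖y - c‖ := by rw [hEq', hnn]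
      have hsm : ‖y - c‖ • (e - c) = ‖e - c‖ • (y - c) :=
        inner_eq_norm_mul_iff_real.1 this
      rw [hnn] at hsm
      have : e - c = y - c := smul_right_injective F (ne_of_gt hpos) hsm
      exact (sub_left_inj.mp this).symm

variable (F) in
/-- The set of exposed points (with explicit exposing functionals). -/
def expoPts (K : Set F) : Set F :=
  {e | e ∈ K ∧ ∃ l : F →L[ℝ] ℝ, ∀ y ∈ K, l y ≤ l e ∧ (l y = l e → y = e)}

lemma straszewicz [FiniteDimensional ℝ F] {K : Set F} (hK : IsCompact K) :
    K ⊆ closure (convexHull ℝ (expoPts F K)) := by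
  intro e he
  by_contra hne
  obtain ⟨f, u, hfD, hfe⟩ := geometric_hahn_banach_closed_point
    ((convex_convexHull ℝ (expoPts F K)).closure) isClosed_closure hne
  set v := (InnerProductSpace.toDual ℝ F).symm f with hv
  have hfv : ∀ x, f x = ⟪v, x⟫ := by
    intro x
    rw [hv, ← InnerProductSpace.toDual_apply_apply,
      (InnerProductSpace.toDual ℝ F).apply_symm_apply]
  obtain ⟨Cb, hCb⟩ := (hK.isBounded).exists_norm_le
  set Dbd : ℝ := Cb + ‖e‖ with hDbd
  have hDb : ∀ x ∈ K, ‖x - e‖ ≤ Dbd := fun x hx =>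
    (norm_sub_le _ _).trans (by rw [hDbd]; have := hCb x hx; linarith)
  set γ : ℝ := f e - u with hγ
  have hγpos : 0 < γ := by simp [hγ]; linarith
  set R : ℝ := (Dbd ^ 2 + 1) / (2 * γ) with hR
  have hRγ : 2 * R * γ = Dbd ^ 2 + 1 := by
    rw [hR, mul_comm (2:ℝ), mul_assoc, div_mul_cancel₀ _ (by linarith : (0:ℝ) < 2 * γ).ne']
  set c : F := e - R • v with hc
  have hec : e - c = R • v := by rw [hc]; abel
  have hRpos : 0 < R := div_pos (by positivity) (by linarith)
  -- points with small f-value are strictly closer to c than e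
  have key : ∀ x ∈ K, f x ≤ u → dist x c < dist e c := by
    intro x hx hfx
    have h1 : ⟪x - e, R • v⟫ = R * (f x - f e) := by
      rw [real_inner_smul_right, inner_sub_left, hfv x, hfv e, real_inner_comm v x,
        real_inner_comm v e]
    have hsq : ‖x - c‖ ^ 2 = ‖x - e‖ ^ 2 + 2 * (R * (f x - f e)) + ‖R • v‖ ^ 2 := by
      have hxe : x - c = (x - e) + R • v := by rw [hc]; abel
      rw [hxe, norm_add_sq_real, h1]
    have hxe2 : ‖x - e‖ ^ 2 ≤ Dbd ^ 2 := by
      nlinarith [hDb x hx, norm_nonneg (x - e)]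
    have hflow : f x - f e ≤ -γ := by rw [hγ]; linarith
    have hlt : ‖x - c‖ ^ 2 < ‖e - c‖ ^ 2 := by
      rw [hec, hsq]
      nlinarith [hxe2, hflow, hRpos.le, hRγ]
    rw [dist_eq_norm, dist_eq_norm]
    exact lt_of_pow_lt_pow_left₀ 2 (norm_nonneg _) hlt
  obtain ⟨xs, hxsK, hxsmax⟩ := hK.exists_isMaxOn ⟨e, he⟩
    ((continuous_id.dist continuous_const).continuousOn :
      ContinuousOn (fun x => dist x c) K)
  have hxsmax' : ∀ y ∈ K, dist y c ≤ dist xs c := fun y hy => hxsmax hy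
  have hu : u < f xs := by
    by_contra h
    push_neg at h
    have h2 := key xs hxsK h
    have h3 := hxsmax' e he
    linarith
  obtain ⟨l, hl⟩ := farthest_exposed hxsK hxsmax'
  have hx : xs ∈ expoPts F K := ⟨hxsK, l, hl⟩
  have : f xs < u := hfD xs (subset_closure (subset_convexHull ℝ _ hx))
  linarith

lemma small_slice {K : Set F} (hK : IsCompact K) {e : F} {l : F →L[ℝ] ℝ}
    (hl : ∀ y ∈ K, l y ≤ l e ∧ (l y = l e → y = e)) {δ : ℝ} (hδ : 0 < δ) :
    ∃ α > 0, ∀ y ∈ K, l e - α < l y → dist y e < δ := by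
  set G : Set F := K ∩ (fun y => dist y e) ⁻¹' (Ici δ) with hG
  have hGc : IsCompact G :=
    hK.inter_right (isClosed_Ici.preimage (continuous_id.dist continuous_const))
  rcases G.eq_empty_or_nonempty with hGe | hGne
  · refine ⟨1, one_pos, fun y hy _ => ?_⟩
    by_contra h
    push_neg at h
    have hyG : y ∈ G := ⟨hy, h⟩
    rw [hGe] at hyG
    exact hyG
  · obtain ⟨y0, hy0G, hy0max⟩ := hGc.exists_isMaxOn hGne l.continuous.continuousOn
    have hy0K : y0 ∈ K := hy0G.1
    have hy0lt : l y0 < l e := by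
      rcases lt_or_eq_of_le (hl y0 hy0K).1 with h | h
      · exact h
      · exfalso
        have := (hl y0 hy0K).2 h
        have hd : δ ≤ dist y0 e := hy0G.2
        rw [this, dist_self] at hd
        linarith
    refine ⟨l e - l y0, by linarith, fun y hy hlt => ?_⟩
    by_contra h
    push_neg at h
    have hyG : y ∈ G := ⟨hy, h⟩
    have := hy0max hyG
    simp only [le_iff_lt_or_eq] at this
    have : l y ≤ l y0 := hy0max hyG
    linarith

lemma sSup_image_eq {K : Set F} (hK : K.Nonempty) {l : F →L[ℝ] ℝ} {e : F}
    (heK : e ∈ closure K) (hmax : ∀ y ∈ closure K, l y ≤ l e) :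
    sSup (l '' K) = l e := by
  have hub : ∀ b ∈ l '' K, b ≤ l e := by
    rintro b ⟨x, hx, rfl⟩
    exact hmax x (subset_closure hx)
  have hbdd : BddAbove (l '' K) := ⟨l e, hub⟩
  refine le_antisymm (csSup_le (hK.image l) hub) ?_
  have h1 : l e ∈ closure (l '' K) :=
    image_closure_subset_closure_image l.continuous ⟨e, heK, rfl⟩
  have h2 : closure (l '' K) ⊆ Iic (sSup (l '' K)) :=
    closure_minimal (fun b hb => le_csSup hbdd hb) isClosed_Iic
  exact h2 h1

lemma findim_bourgain [FiniteDimensional ℝ F] {K : Set F} (hKb : IsBounded K)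
    (hKc : Convex ℝ K) {U : Set F} (hU : IsOpen U) {z0 : F} (hz0K : z0 ∈ K) (hz0U : z0 ∈ U) :
    ∃ (m : ℕ) (g : Fin m → F →L[ℝ] ℝ) (α μ : Fin m → ℝ),
      (∀ i, 0 < α i) ∧ (∀ i, 0 ≤ μ i) ∧ ∑ i, μ i = 1 ∧
      ∀ y : Fin m → F, (∀ i, y i ∈ K ∧ sSup (g i '' K) - α i < g i (y i)) →
        ∑ i, μ i • y i ∈ U := by
  have hK' : IsCompact (closure K) := hKb.isCompact_closure
  have hz0 : z0 ∈ closure (convexHull ℝ (expoPts F (closure K))) :=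
    straszewicz hK' (subset_closure hz0K)
  obtain ⟨z, hzconv, hzU⟩ :
      (convexHull ℝ (expoPts F (closure K)) ∩ U).Nonempty := by
    rw [Set.inter_comm]
    exact mem_closure_iff.1 hz0 U hU hz0U
  obtain ⟨δ', hδ'pos, hball⟩ := Metric.isOpen_iff.1 hU z hzU
  rw [convexHull_eq] at hzconv
  obtain ⟨ι, t, w, zf, hw0, hw1, hzf, hcm⟩ := hzconv
  set m := t.card with hm
  set σ : Fin m ≃ {x // x ∈ t} := t.equivFin.symm with hσ
  have hexp : ∀ i : Fin m, zf (σ i : ι) ∈ expoPts F (closure K) :=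
    fun i => hzf _ (σ i).2
  have hmemK' : ∀ i : Fin m, zf (σ i : ι) ∈ closure K := fun i => (hexp i).1
  choose l hl using fun i => (hexp i).2
  set δ : ℝ := δ' / 2 with hδdef
  have hδ : 0 < δ := by positivity
  choose α hαpos hα using fun i : Fin m => small_slice hK' (hl i) hδ
  set μ : Fin m → ℝ := fun i => w (σ i) with hμ
  have hsum : ∑ i, μ i = 1 := by
    rw [hμ, ← hw1, ← Finset.sum_coe_sort t w]
    exact Equiv.sum_comp σ (fun x => w ↑x)
  have hMi : ∀ i, sSup (l i '' K) = l i (zf (σ i)) := fun i =>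
    sSup_image_eq ⟨z0, hz0K⟩ (hmemK' i) (fun y hy => (hl i y hy).1)
  refine ⟨m, l, α, μ, hαpos, fun i => hw0 _ (σ i).2, hsum, ?_⟩
  intro y hy
  have hzsum : z = ∑ i, μ i • zf (σ i) := by
    rw [← hcm, Finset.centerMass_eq_of_sum_1 _ _ hw1,
      ← Finset.sum_coe_sort t (fun i => w i • zf i),
      ← Equiv.sum_comp σ (fun x : {x // x ∈ t} => w ↑x • zf ↑x)]
  have hdist : ∀ i, ‖y i - zf (σ i)‖ ≤ δ := by
    intro i
    have h2 := (hy i).2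
    rw [hMi i] at h2
    have h3 := hα i (y i) (subset_closure (hy i).1) h2
    rw [dist_eq_norm] at h3
    exact h3.le
  apply hball
  rw [mem_ball, dist_eq_norm, hzsum, ← Finset.sum_sub_distrib]
  have hb : ‖∑ i, (μ i • y i - μ i • zf (σ i))‖ ≤ δ := by
    calc ‖∑ i, (μ i • y i - μ i • zf (σ i))‖
        ≤ ∑ i, ‖μ i • y i - μ i • zf (σ i)‖ := norm_sum_le _ _
      _ = ∑ i, μ i * ‖y i - zf (σ i)‖ := by
          refine Finset.sum_congr rfl fun i _ => ?_
          rw [← smul_sub, norm_smul, Real.norm_eq_abs, abs_of_nonneg (hw0 _ (σ i).2)]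
      _ ≤ ∑ i, μ i * δ :=
          Finset.sum_le_sum fun i _ => mul_le_mul_of_nonneg_left (hdist i) (hw0 _ (σ i).2)
      _ = δ := by rw [← Finset.sum_mul, hsum, one_mul]
  calc ‖∑ i, (μ i • y i - μ i • zf (σ i))‖ ≤ δ := hb
    _ < δ' := by rw [hδdef]; linarith

end InnerLemmas

section BanachAux

variable {X : Type*} [NormedAddCommGroup X] [NormedSpace ℝ X]

lemma isSlice_self {A : Set X} (hA : A.Nonempty) : IsSlice A A := by
  refine ⟨hA, 0, 1, one_pos, ?_⟩
  ext x
  simp [hA.image_const, csSup_singleton]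

lemma slice_relWeakOpen {A S : Set X} (hS : IsSlice A S) : RelWeakOpen A S := by
  obtain ⟨hne, f, α, hα, hSeq⟩ := hS
  refine ⟨hne, {z : WeakSpace ℝ X | sSup (f '' A) - α < (topDualPairing ℝ X).flip z f},
    isOpen_lt continuous_const (WeakBilin.eval_continuous _ f), ?_⟩
  rw [hSeq]
  rfl

lemma bourgain_X {A W : Set X} (hA : A.Nonempty) (hAb : Bornology.IsBounded A)
    (hAc : Convex ℝ A) (hW : RelWeakOpen A W) :
    ∃ C : Set X, IsConvexCombOfSlices A C ∧ C ⊆ W := by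
  classical
  obtain ⟨⟨x0, hx0W⟩, U, hUopen, hWeq⟩ := hW
  have hx0A : x0 ∈ A := (hWeq ▸ hx0W).1
  have hx0U : toWeakSpace ℝ X x0 ∈ U := (hWeq ▸ hx0W).2
  obtain ⟨V, hVopen, hVpre⟩ : ∃ V : Set ((X →L[ℝ] ℝ) → ℝ), IsOpen V ∧
      (fun (x : WeakSpace ℝ X) (y : X →L[ℝ] ℝ) => (topDualPairing ℝ X).flip x y) ⁻¹' V = U :=
    isOpen_induced_iff.1 hUopen
  have hx0V : (fun y : X →L[ℝ] ℝ => y x0) ∈ V := by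
    rw [← hVpre] at hx0U; exact hx0U
  obtain ⟨I, u, hu, hpi⟩ := isOpen_pi_iff.1 hVopen _ hx0V
  let Φ : X →L[ℝ] EuclideanSpace ℝ {f // f ∈ I} :=
    ((PiLp.continuousLinearEquiv 2 ℝ
        (fun _ : {f // f ∈ I} => ℝ)).symm : _ →L[ℝ] _).comp
      (ContinuousLinearMap.pi (fun f : {f // f ∈ I} => (f : X →L[ℝ] ℝ)))
  set K : Set (EuclideanSpace ℝ {f // f ∈ I}) := Φ '' A with hK
  have hKb : Bornology.IsBounded K := (Φ.lipschitz).isBounded_image hAb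
  have hKc : Convex ℝ K := by
    have h := hAc.linear_image Φ.toLinearMap
    rw [ContinuousLinearMap.coe_coe] at h
    exact h
  set U' : Set (EuclideanSpace ℝ {f // f ∈ I}) :=
    ⋂ f : {f // f ∈ I}, (EuclideanSpace.proj f) ⁻¹' (u f) with hU'
  have hU'open : IsOpen U' :=
    isOpen_iInter_of_finite fun f =>
      (hu f.1 f.2).1.preimage (EuclideanSpace.proj f).continuous
  have hz0K : Φ x0 ∈ K := Set.mem_image_of_mem Φ hx0A
  have hz0U' : Φ x0 ∈ U' := Set.mem_iInter.2 fun f => (hu f.1 f.2).2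
  obtain ⟨m, g, α, μ, hαpos, hμ0, hμ1, hfin⟩ := findim_bourgain hKb hKc hU'open hz0K hz0U'
  set fX : Fin m → X →L[ℝ] ℝ := fun i => (g i).comp Φ with hfX
  set S : Fin m → Set X := fun i => {x | x ∈ A ∧ sSup (fX i '' A) - α i < fX i x} with hS
  have himgeq : ∀ i, g i '' K = fX i '' A := by
    intro i
    rw [hK, ← Set.image_comp]
    rfl
  have hSlice : ∀ i, IsSlice A (S i) := by
    intro i
    refine ⟨?_, fX i, α i, hαpos i, rfl⟩
    obtain ⟨b, hbmem, hbgt⟩ := exists_lt_of_lt_csSup (hA.image (fX i))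
      (sub_lt_self _ (hαpos i))
    obtain ⟨x, hxA, rfl⟩ := hbmem
    exact ⟨x, hxA, hbgt⟩
  refine ⟨{x | ∃ y : Fin m → X, (∀ i, y i ∈ S i) ∧ x = ∑ i, μ i • y i},
    ⟨m, S, μ, hSlice, hμ0, hμ1, rfl⟩, ?_⟩
  rintro x ⟨y, hy, rfl⟩
  have hyA : ∀ i, y i ∈ A := fun i => (hy i).1
  have hxA : ∑ i, μ i • y i ∈ A := hAc.sum_mem (fun i _ => hμ0 i) hμ1 (fun i _ => hyA i)
  have hin : Φ (∑ i, μ i • y i) ∈ U' := by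
    have hΦsum : Φ (∑ i, μ i • y i) = ∑ i, μ i • Φ (y i) := by
      simp [map_sum, map_smul]
    rw [hΦsum]
    refine hfin (fun i => Φ (y i)) fun i => ⟨Set.mem_image_of_mem Φ (hyA i), ?_⟩
    rw [himgeq i]
    exact (hy i).2
  rw [hWeq]
  refine ⟨hxA, ?_⟩
  show toWeakSpace ℝ X (∑ i, μ i • y i) ∈ U
  rw [← hVpre]
  apply hpi
  rw [Set.mem_pi]
  intro f hf
  exact Set.mem_iInter.1 hin ⟨f, hf⟩

end BanachAux

/-- `a` is an SCD point of `A` iff there is a determining sequence of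
nonempty relatively weakly open subsets of `A` iff there is a determining sequence of
convex combinations of slices of `A`. -/
theorem stmt5 {X : Type*} [NormedAddCommGroup X] [NormedSpace ℝ X] [CompleteSpace X]
    (A : Set X) (hA : A.Nonempty) (hAb : Bornology.IsBounded A) (hAc : Convex ℝ A)
    (a : X) (ha : a ∈ A) :
    (SCDPoint A a ↔
      ∃ W : ℕ → Set X, (∀ n, RelWeakOpen A (W n)) ∧ Determining A W a) ∧
    (SCDPoint A a ↔
      ∃ C : ℕ → Set X, (∀ n, IsConvexCombOfSlices A (C n)) ∧ Determining A C a) := by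
  have h12 : SCDPoint A a →
      ∃ W : ℕ → Set X, (∀ n, RelWeakOpen A (W n)) ∧ Determining A W a := by
    rintro ⟨-, V, hV, hdet⟩
    exact ⟨V, fun n => slice_relWeakOpen (hV n), hdet⟩
  have h23 : (∃ W : ℕ → Set X, (∀ n, RelWeakOpen A (W n)) ∧ Determining A W a) →
      ∃ C : ℕ → Set X, (∀ n, IsConvexCombOfSlices A (C n)) ∧ Determining A C a := by
    rintro ⟨W, hW, hdet⟩
    choose C hC hsub using fun n => bourgain_X hA hAb hAc (hW n)
    refine ⟨C, hC, fun B hB hmeet => hdet B hB fun n => ?_⟩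
    exact (hmeet n).mono (Set.inter_subset_inter_right B (hsub n))
  have h31 : (∃ C : ℕ → Set X, (∀ n, IsConvexCombOfSlices A (C n)) ∧ Determining A C a) →
      SCDPoint A a := by
    rintro ⟨C, hC, hdet⟩
    classical
    choose m S l hS hl0 hl1 hCeq using hC
    set V : ℕ → Set X := fun k =>
      if h : (Nat.unpair k).2 < m (Nat.unpair k).1
      then S (Nat.unpair k).1 ⟨(Nat.unpair k).2, h⟩ else A with hV
    refine ⟨ha, V, fun k => ?_, ?_⟩
    · rw [hV]
      dsimp only
      split
      · exact hS _ _
      · exact isSlice_self hA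
    · intro B hB hmeet
      have hBA : convexHull ℝ B ⊆ A := convexHull_min hB hAc
      have key : ∀ n, ((convexHull ℝ B) ∩ C n).Nonempty := by
        intro n
        have hbi : ∀ i : Fin (m n), ∃ b, b ∈ B ∧ b ∈ S n i := by
          intro i
          have key2 : ∀ p : ℕ × ℕ, p = (n, (i : ℕ)) →
              (if h : p.2 < m p.1 then S p.1 ⟨p.2, h⟩ else A) = S n i := by
            rintro p rfl
            rw [dif_pos i.isLt, Fin.eta]
          have hVeq : V (Nat.pair n i) = S n i := by
            rw [hV]
            exact key2 (Nat.unpair (Nat.pair n ↑i)) (Nat.unpair_pair n ↑i)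
          obtain ⟨b, hbB, hbV⟩ := hmeet (Nat.pair n i)
          rw [hVeq] at hbV
          exact ⟨b, hbB, hbV⟩
        choose b hbB hbS using hbi
        refine ⟨∑ i, l n i • b i, ?_, ?_⟩
        · exact (convex_convexHull ℝ B).sum_mem (fun i _ => hl0 n i) (hl1 n)
            (fun i _ => subset_convexHull ℝ B (hbB i))
        · rw [hCeq n]
          exact ⟨b, hbS, rfl⟩
      have hfin := hdet (convexHull ℝ B) hBA key
      rwa [(convex_convexHull ℝ B).convexHull_eq] at hfin
  exact ⟨⟨h12, fun h => h31 (h23 h)⟩, ⟨fun h => h23 (h12 h), h31⟩⟩
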